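/- For s ∈ (0,1), finite sets 𝒵₁, 𝒵₂, a probability distribution P on 𝒵₁ × 𝒵₂, and conditional densities p(y|z₁,z₂) ≥ 0 with ∫ p(y|z₁,z₂) dy = 1, the quantity A(s) := Σ_{z₂} P_{Z₂}(z₂) ∫ ( Σ_{z₁} P_{Z₁|Z₂}(z₁|z₂) p(y|z₁,z₂)^{1+s} )^{1/(1+s)} dy satisfies: A(s) is at most the corresponding unconditional quantity B(s) := ∫ ( Σ_{z₁,z₂} P(z₁,z₂) p(y|z₁,z₂)^{1+s} )^{1/(1+s)} dy, i.e., exp((s/(1+s)) I^↓_{1+s}(Y;Z₁|Z₂)) ≤ exp((s/(1+s)) I^↓_{1+s}(Y;Z₁,Z₂)). -/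

import Mathlib

open MeasureTheory ENNReal

/-- `exp((s/(1+s)) I^↓_{1+s}(Y;Z₁|Z₂)) ≤ exp((s/(1+s)) I^↓_{1+s}(Y;Z₁,Z₂))`:
the conditional Gallager-type quantity is bounded by the unconditional one. -/
theorem stmt3 {Z₁ Z₂ : Type*} [Fintype Z₁] [Fintype Z₂]
    (s : ℝ) (hs0 : 0 < s) (hs1 : s < 1)
    (P : Z₁ → Z₂ → ℝ≥0∞) (hP : ∑ z₁, ∑ z₂, P z₁ z₂ = 1)
    (p : Z₁ → Z₂ → ℝ → ℝ≥0∞) (hm : ∀ z₁ z₂, Measurable (p z₁ z₂))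
    (hdens : ∀ z₁ z₂, ∫⁻ y : ℝ, p z₁ z₂ y = 1) :
    (∑ z₂, (∑ z₁, P z₁ z₂) *
        ∫⁻ y : ℝ, (∑ z₁, (P z₁ z₂ / ∑ z₁', P z₁' z₂) * (p z₁ z₂ y) ^ (1 + s)) ^ (1 / (1 + s)))
      ≤ ∫⁻ y : ℝ, (∑ z₁, ∑ z₂, P z₁ z₂ * (p z₁ z₂ y) ^ (1 + s)) ^ (1 / (1 + s)) := by
  have hs : (0:ℝ) < 1 + s := by linarith
  set α : ℝ := 1 / (1 + s) with hα
  have hα0 : 0 < α := by positivity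
  set w : Z₂ → ℝ≥0∞ := fun z₂ => ∑ z₁, P z₁ z₂ with hw
  have hw1 : ∑ z₂, w z₂ = 1 := by rw [← hP]; exact Finset.sum_comm.symm
  have hwtop : ∀ z₂, w z₂ ≠ ⊤ := by
    intro z₂
    refine ne_top_of_le_ne_top one_ne_top ?_
    rw [← hw1]
    exact Finset.single_le_sum (fun _ _ => zero_le) (Finset.mem_univ z₂)
  -- Jensen-type inequality
  have jensen : ∀ (T : Z₂ → ℝ≥0∞), ∑ z₂, w z₂ * (T z₂) ^ α ≤ (∑ z₂, w z₂ * T z₂) ^ α := by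
    intro T
    have h1 := ENNReal.rpow_arith_mean_le_arith_mean_rpow Finset.univ w
      (fun z₂ => (T z₂) ^ α) hw1 (by linarith : (1:ℝ) ≤ 1 + s)
    have h2 : ∀ z₂ : Z₂, ((T z₂) ^ α) ^ (1 + s) = T z₂ := by
      intro z₂
      rw [← ENNReal.rpow_mul, hα, one_div_mul_cancel hs.ne', ENNReal.rpow_one]
    simp only [h2] at h1
    have h3 := ENNReal.rpow_le_rpow h1 hα0.le
    rwa [← ENNReal.rpow_mul, mul_comm (1+s) α, hα, one_div_mul_cancel hs.ne',
      ENNReal.rpow_one] at h3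
  -- pointwise identity: w z₂ * normalized sum = unnormalized sum
  have hws : ∀ z₂ y, w z₂ * (∑ z₁, (P z₁ z₂ / w z₂) * (p z₁ z₂ y) ^ (1 + s))
      = ∑ z₁, P z₁ z₂ * (p z₁ z₂ y) ^ (1 + s) := by
    intro z₂ y
    rcases eq_or_ne (w z₂) 0 with h0 | h0
    · have hz : ∀ z₁, P z₁ z₂ = 0 := by
        intro z₁
        have := Finset.sum_eq_zero_iff.mp h0
        exact this z₁ (Finset.mem_univ z₁)
      simp [hz, h0]
    · rw [Finset.mul_sum]
      refine Finset.sum_congr rfl fun z₁ _ => ?_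
      rw [← mul_assoc, ENNReal.mul_div_cancel h0 (hwtop z₂)]
  -- measurability
  have hmeas : ∀ z₂ : Z₂, Measurable
      (fun y => (∑ z₁, (P z₁ z₂ / w z₂) * (p z₁ z₂ y) ^ (1 + s)) ^ α) := by
    intro z₂
    apply Measurable.pow_const
    exact Finset.measurable_sum _ fun z₁ _ =>
      (measurable_const.mul ((hm z₁ z₂).pow_const _))
  calc ∑ z₂, w z₂ * ∫⁻ y : ℝ, (∑ z₁, (P z₁ z₂ / w z₂) * (p z₁ z₂ y) ^ (1 + s)) ^ α
      = ∑ z₂, ∫⁻ y : ℝ, w z₂ * (∑ z₁, (P z₁ z₂ / w z₂) * (p z₁ z₂ y) ^ (1 + s)) ^ α := by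
        refine Finset.sum_congr rfl fun z₂ _ => ?_
        rw [lintegral_const_mul _ (hmeas z₂)]
    _ = ∫⁻ y : ℝ, ∑ z₂, w z₂ * (∑ z₁, (P z₁ z₂ / w z₂) * (p z₁ z₂ y) ^ (1 + s)) ^ α := by
        rw [lintegral_finset_sum]
        exact fun z₂ _ => measurable_const.mul (hmeas z₂)
    _ ≤ ∫⁻ y : ℝ, (∑ z₁, ∑ z₂, P z₁ z₂ * (p z₁ z₂ y) ^ (1 + s)) ^ α := by
        refine lintegral_mono fun y => ?_
        calc ∑ z₂, w z₂ * (∑ z₁, (P z₁ z₂ / w z₂) * (p z₁ z₂ y) ^ (1 + s)) ^ α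
            ≤ (∑ z₂, w z₂ * (∑ z₁, (P z₁ z₂ / w z₂) * (p z₁ z₂ y) ^ (1 + s))) ^ α :=
              jensen _
          _ = (∑ z₁, ∑ z₂, P z₁ z₂ * (p z₁ z₂ y) ^ (1 + s)) ^ α := by
              rw [Finset.sum_congr rfl fun z₂ _ => hws z₂ y, Finset.sum_comm]
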